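/- If f : X → Y, T : Y → X are 1-bounded linear maps with ‖T∘f − id_X‖ ≤ ε (0 < ε < 1), then in the space X ⊕_f Y (i.e., X × Y with norm ‖·‖_f) there exist 1-bounded linear operators P : X ⊕_f Y → X and Q : X ⊕_f Y → Y such that P∘i = id_X, Q∘j = id_Y, P∘j = T, and Q∘i = f, where i(x) = (x,0), j(y) = (0,y). -/
import Mathlib


/-- existence of 1-bounded operators P, Q on X ⊕_f Y with
P∘i = id, Q∘j = id, P∘j = T and Q∘i = f. -/
theorem stmt_7 {X Y : Type*} [NormedAddCommGroup X] [NormedSpace ℝ X]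
    [NormedAddCommGroup Y] [NormedSpace ℝ Y]
    (ε : ℝ) (hε0 : 0 < ε) (hε1 : ε < 1)
    (f : X →ₗ[ℝ] Y) (T : Y →ₗ[ℝ] X)
    (hf : ∀ x, ‖f x‖ ≤ ‖x‖) (hT : ∀ y, ‖T y‖ ≤ ‖y‖)
    (hTf : ∀ x, ‖T (f x) - x‖ ≤ ε * ‖x‖)
    (N : X × Y → ℝ)
    (hN : N = fun p => sInf {r : ℝ | ∃ w : X, r = ‖p.1 - w‖ + ‖p.2 + f w‖ + ε * ‖w‖}) :
    ∃ (P : X × Y →ₗ[ℝ] X) (Q : X × Y →ₗ[ℝ] Y),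
      (∀ p : X × Y, ‖P p‖ ≤ N p) ∧ (∀ p : X × Y, ‖Q p‖ ≤ N p) ∧
      (∀ x : X, P (x, 0) = x) ∧ (∀ y : Y, Q (0, y) = y) ∧
      (∀ y : Y, P (0, y) = T y) ∧ (∀ x : X, Q (x, 0) = f x) := by
  refine ⟨LinearMap.fst ℝ X Y + T.comp (LinearMap.snd ℝ X Y),
    f.comp (LinearMap.fst ℝ X Y) + LinearMap.snd ℝ X Y, ?_, ?_, ?_, ?_, ?_, ?_⟩
  · intro p
    rw [hN]
    refine le_csInf ⟨_, ⟨(0:X), rfl⟩⟩ ?_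
    rintro r ⟨w, rfl⟩
    simp only [LinearMap.add_apply, LinearMap.comp_apply, LinearMap.fst_apply,
      LinearMap.snd_apply]
    have key : p.1 + T p.2 = (p.1 - w) + T (p.2 + f w) + (w - T (f w)) := by
      simp [map_add]; abel
    calc ‖p.1 + T p.2‖ ≤ ‖p.1 - w‖ + ‖T (p.2 + f w)‖ + ‖w - T (f w)‖ := by
          rw [key]; exact norm_add₃_le
      _ ≤ ‖p.1 - w‖ + ‖p.2 + f w‖ + ε * ‖w‖ := by
          gcongr
          · exact hT _
          · rw [← norm_neg]; simpa [neg_sub] using hTf w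
  · intro p
    rw [hN]
    refine le_csInf ⟨_, ⟨(0:X), rfl⟩⟩ ?_
    rintro r ⟨w, rfl⟩
    simp only [LinearMap.add_apply, LinearMap.comp_apply, LinearMap.fst_apply,
      LinearMap.snd_apply]
    have key : f p.1 + p.2 = f (p.1 - w) + (p.2 + f w) := by
      simp [map_sub]
    calc ‖f p.1 + p.2‖ ≤ ‖f (p.1 - w)‖ + ‖p.2 + f w‖ := by rw [key]; try exact norm_add_le _ _
      _ ≤ ‖p.1 - w‖ + ‖p.2 + f w‖ + ε * ‖w‖ := by
          have := hf (p.1 - w)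
          have : ‖f (p.1 - w)‖ + ‖p.2 + f w‖ ≤ ‖p.1 - w‖ + ‖p.2 + f w‖ := by gcongr
          nlinarith [norm_nonneg w]
  · intro x; simp
  · intro y; simp
  · intro y; simp
  · intro x; simp
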